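/- For every positive integer α and real G, the α-th derivative of x ↦ exp(i G x²) equals exp(i G x²) · Σ_{k=0}^{⌊α/2⌋} p_{α,k} (2iG)^{α−k} x^{α−2k} for some nonnegative real coefficients p_{α,k} with p_{α,0} = 1, p_{α,k} ≥ 1 for k ≥ 1, and Σ_{k=1}^{⌊α/2⌋} p_{α,k} ≤ α!. -/

import Mathlib

open Complex Finset

lemma hasDerivAt_key (G : ℝ) (n : ℕ) (a : ℕ → ℂ) (d : ℕ → ℕ) (x : ℝ) :
    HasDerivAt (fun y : ℝ => Complex.exp (I * (G:ℂ) * (y:ℂ)^2) * ∑ k ∈ range n, a k * (y:ℂ)^(d k))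
      (Complex.exp (I * (G:ℂ) * (x:ℂ)^2) *
        ((2*I*(G:ℂ)*(x:ℂ)) * (∑ k ∈ range n, a k * (x:ℂ)^(d k))
          + ∑ k ∈ range n, a k * ((d k : ℂ)) * (x:ℂ)^(d k - 1))) x := by
  have hexp : HasDerivAt (fun z : ℂ => Complex.exp (I * (G:ℂ) * z^2))
      (Complex.exp (I * (G:ℂ) * (x:ℂ)^2) * (I * (G:ℂ) * ((2:ℕ) * (x:ℂ)^(2-1)))) (x:ℂ) :=
    ((hasDerivAt_pow 2 (x:ℂ)).const_mul (I * (G:ℂ))).cexp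
  have hsum : HasDerivAt (fun z : ℂ => ∑ k ∈ range n, a k * z^(d k))
      (∑ k ∈ range n, a k * ((d k : ℂ) * (x:ℂ)^(d k - 1))) (x:ℂ) :=
    HasDerivAt.fun_sum fun k _ => (hasDerivAt_pow (d k) (x:ℂ)).const_mul (a k)
  have h := (hexp.fun_mul hsum).comp_ofReal
  convert h using 1
  rw [mul_add]
  congr 1
  · push_cast; ring
  · congr 1
    exact Finset.sum_congr rfl fun k _ => by ring

lemma sum_identity (c X : ℂ) (α : ℕ) (p q : ℕ → ℝ)
    (hp0 : p 0 = 1) (hq0 : q 0 = 1)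
    (hpz : ∀ k, α/2 < k → p k = 0)
    (hqz : ∀ k, (α+1)/2 < k → q k = 0)
    (hqk : ∀ i, q (i+1) = p (i+1) + ((α - 2*i : ℕ):ℝ) * p i) :
    (c*X) * (∑ k ∈ range (α/2+1), (p k:ℂ) * c^(α-k) * X^(α-2*k))
      + ∑ k ∈ range (α/2+1), ((p k:ℂ) * c^(α-k)) * ((α-2*k : ℕ):ℂ) * X^(α-2*k-1)
    = ∑ k ∈ range ((α+1)/2+1), (q k:ℂ) * c^(α+1-k) * X^(α+1-2*k) := by
  have hR1 : ∑ k ∈ range ((α+1)/2+1), (q k:ℂ) * c^(α+1-k) * X^(α+1-2*k)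
      = ∑ k ∈ range (α+2), (q k:ℂ) * c^(α+1-k) * X^(α+1-2*k) := by
    apply Finset.sum_subset (Finset.range_subset_range.mpr (by omega))
    intro k _ hk
    simp only [Finset.mem_range, not_lt] at hk
    rw [hqz k (by omega)]
    simp
  have hR2 : ∑ k ∈ range (α+2), (q k:ℂ) * c^(α+1-k) * X^(α+1-2*k)
      = (∑ i ∈ range (α+1), (q (i+1):ℂ) * c^(α+1-(i+1)) * X^(α+1-2*(i+1)))
        + (q 0:ℂ) * c^(α+1) * X^(α+1) := by
    rw [Finset.sum_range_succ' (fun k => (q k:ℂ) * c^(α+1-k) * X^(α+1-2*k)) (α+1)]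
    norm_num
  have hR3 : ∑ i ∈ range (α+1), (q (i+1):ℂ) * c^(α+1-(i+1)) * X^(α+1-2*(i+1))
      = (∑ i ∈ range (α+1), (p (i+1):ℂ) * c^(α-i) * X^(α-2*i-1))
        + ∑ i ∈ range (α+1), ((α-2*i:ℕ):ℂ) * (p i:ℂ) * c^(α-i) * X^(α-2*i-1) := by
    rw [← Finset.sum_add_distrib]
    apply Finset.sum_congr rfl
    intro i _
    rw [hqk i, show α+1-(i+1) = α - i from by omega,
      show α+1-2*(i+1) = α-2*i-1 from by omega]
    push_cast; ring
  have hL1 : (c*X) * (∑ k ∈ range (α/2+1), (p k:ℂ) * c^(α-k) * X^(α-2*k))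
      = (∑ i ∈ range (α+1), (p (i+1):ℂ) * c^(α-i) * X^(α-2*i-1))
        + (p 0:ℂ) * c^(α+1) * X^(α+1) := by
    rw [Finset.mul_sum]
    rw [Finset.sum_congr rfl (g := fun k => (p k:ℂ) * c^(α+1-k) * X^(α+1-2*k)) ?e1]
    case e1 =>
      intro k hk
      simp only [Finset.mem_range] at hk
      show _ = (p k:ℂ) * c^(α+1-k) * X^(α+1-2*k)
      rw [show α+1-k = (α-k)+1 from by omega, show α+1-2*k = (α-2*k)+1 from by omega,
        pow_succ, pow_succ]
      ring
    rw [Finset.sum_subset (Finset.range_subset_range.mpr (by omega : α/2+1 ≤ α+2)) ?v1]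
    case v1 =>
      intro k _ hk
      simp only [Finset.mem_range, not_lt] at hk
      rw [hpz k (by omega)]
      simp
    rw [Finset.sum_range_succ' (fun k => (p k:ℂ) * c^(α+1-k) * X^(α+1-2*k)) (α+1)]
    congr 1
    apply Finset.sum_congr rfl
    intro i _
    rw [show α+1-(i+1) = α - i from by omega, show α+1-2*(i+1) = α-2*i-1 from by omega]
  have hL2 : ∑ k ∈ range (α/2+1), ((p k:ℂ) * c^(α-k)) * ((α-2*k : ℕ):ℂ) * X^(α-2*k-1)
      = ∑ i ∈ range (α+1), ((α-2*i:ℕ):ℂ) * (p i:ℂ) * c^(α-i) * X^(α-2*i-1) := by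
    rw [Finset.sum_subset (Finset.range_subset_range.mpr (by omega : α/2+1 ≤ α+1)) ?v2]
    case v2 =>
      intro k _ hk
      simp only [Finset.mem_range, not_lt] at hk
      rw [hpz k (by omega)]
      simp
    apply Finset.sum_congr rfl
    intro i _
    ring
  rw [hR1, hR2, hR3, hL1, hL2, hp0, hq0]
  push_cast
  ring

lemma aux_main (G : ℝ) : ∀ α : ℕ, 1 ≤ α → ∃ p : ℕ → ℝ,
    p 0 = 1 ∧ (∀ k, 0 ≤ p k) ∧ (∀ k, α / 2 < k → p k = 0) ∧
    (∀ k, 1 ≤ k → k ≤ α / 2 → 1 ≤ p k) ∧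
    (∑ k ∈ Finset.Icc 1 (α / 2), p k) ≤ (α.factorial : ℝ) ∧
    ∀ x : ℝ, iteratedDeriv α (fun y : ℝ => Complex.exp (I * (G:ℂ) * (y:ℂ)^2)) x =
      Complex.exp (I * (G:ℂ) * (x:ℂ)^2) *
        ∑ k ∈ Finset.range (α / 2 + 1), (p k : ℂ) * (2*I*(G:ℂ))^(α-k) * (x:ℂ)^(α-2*k) := by
  intro α hα1
  induction α, hα1 using Nat.le_induction with
  | base =>
    refine ⟨fun k => if k = 0 then 1 else 0, by simp, ?_, ?_, ?_, ?_⟩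
    · intro k; simp only; split <;> norm_num
    · intro k hk; simp only [if_neg (by omega : ¬ k = 0)]
    · intro k h1 h2; omega
    · refine ⟨by simp, ?_⟩
      intro x
      rw [iteratedDeriv_one]
      have h := (((hasDerivAt_pow 2 (x:ℂ)).const_mul (I * (G:ℂ))).cexp).comp_ofReal
      rw [h.deriv]
      simp
      ring
  | succ α hα IH =>
    obtain ⟨p, hp0, hpnn, hpz, hp1, hpsum, hpd⟩ := IH
    set q : ℕ → ℝ := fun k => if k = 0 then 1 else p k + ((α - 2*(k-1) : ℕ) : ℝ) * p (k-1)
      with hq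
    have hq0 : q 0 = 1 := by simp [hq]
    have hqk : ∀ i : ℕ, q (i+1) = p (i+1) + ((α - 2*i : ℕ):ℝ) * p i := by
      intro i; simp [hq]
    have hqnn : ∀ k, 0 ≤ q k := by
      intro k
      rcases Nat.eq_zero_or_pos k with h|h
      · rw [h, hq0]; norm_num
      · obtain ⟨i, rfl⟩ := Nat.exists_eq_add_of_le h
        rw [show 1 + i = i + 1 from by omega, hqk i]
        have h1 := hpnn (i+1)
        have h2 := hpnn i
        have h3 : (0:ℝ) ≤ ((α - 2*i : ℕ):ℝ) := Nat.cast_nonneg _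
        nlinarith
    have hqz : ∀ k, (α+1)/2 < k → q k = 0 := by
      intro k hk
      obtain ⟨i, rfl⟩ : ∃ i, k = i + 1 := ⟨k - 1, by omega⟩
      rw [hqk i, hpz (i+1) (by omega)]
      by_cases h2 : α/2 < i
      · rw [hpz i h2]; ring
      · rw [show α - 2*i = 0 from by omega]; simp
    have hq1 : ∀ k, 1 ≤ k → k ≤ (α+1)/2 → 1 ≤ q k := by
      intro k hk hk2
      obtain ⟨i, rfl⟩ : ∃ i, k = i + 1 := ⟨k - 1, by omega⟩
      rw [hqk i]
      have hf : 1 ≤ α - 2*i := by omega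
      have hp' : 1 ≤ p i := by
        rcases Nat.eq_zero_or_pos i with h|h
        · rw [h, hp0]
        · exact hp1 i h (by omega)
      have h1 := hpnn (i+1)
      have hfc : (1:ℝ) ≤ ((α - 2*i : ℕ) : ℝ) := by exact_mod_cast hf
      nlinarith
    have key_sum : ∀ (m : ℕ) (f : ℕ → ℝ), ∑ k ∈ Icc 1 m, f k = ∑ i ∈ range m, f (1+i) := by
      intro m f
      rw [← Finset.Ico_add_one_right_eq_Icc, Finset.sum_Ico_eq_sum_range]
      norm_num
    have hpad : ∀ M, α/2 ≤ M → ∑ k ∈ Icc 1 M, p k = ∑ k ∈ Icc 1 (α/2), p k := by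
      intro M hM
      symm
      apply Finset.sum_subset
      · intro k hk; simp only [Finset.mem_Icc] at hk ⊢; omega
      · intro k hk1 hk2
        simp only [Finset.mem_Icc] at hk1 hk2
        exact hpz k (by omega)
    have hqsum : (∑ k ∈ Icc 1 ((α+1)/2), q k) ≤ ((α+1).factorial : ℝ) := by
      set m' := (α+1)/2 with hm'
      have hm1 : 1 ≤ m' := by omega
      rw [key_sum]
      have hsplit : ∑ i ∈ range m', q (1+i)
          = ∑ i ∈ range m', p (1+i) + ∑ i ∈ range m', ((α - 2*i : ℕ):ℝ) * p i := by
        rw [← Finset.sum_add_distrib]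
        apply Finset.sum_congr rfl
        intro i _
        rw [show 1 + i = i + 1 from by omega, hqk i]
      rw [hsplit]
      have hb1 : ∑ i ∈ range m', p (1+i) ≤ (α.factorial : ℝ) := by
        rw [← key_sum, hpad m' (by omega)]; exact hpsum
      have hb2 : ∑ i ∈ range m', ((α - 2*i : ℕ):ℝ) * p i
          ≤ ((α - 2 : ℕ):ℝ) * (α.factorial:ℝ) + α := by
        obtain ⟨n, hn⟩ : ∃ n, m' = n + 1 := ⟨m' - 1, by omega⟩
        rw [hn, Finset.sum_range_succ' (fun i => ((α - 2*i : ℕ):ℝ) * p i) n]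
        simp only [Nat.mul_zero, Nat.sub_zero, hp0, mul_one]
        have hterm : ∑ i ∈ range n, ((α - 2*(i+1) : ℕ):ℝ) * p (i+1)
            ≤ ((α - 2 : ℕ):ℝ) * ∑ i ∈ range n, p (i+1) := by
          rw [Finset.mul_sum]
          apply Finset.sum_le_sum
          intro i _
          apply mul_le_mul_of_nonneg_right _ (hpnn (i+1))
          exact_mod_cast Nat.sub_le_sub_left (by omega) α
        have hsum2 : ∑ i ∈ range n, p (i+1) ≤ (α.factorial : ℝ) := by
          have he : ∑ i ∈ range n, p (i+1) = ∑ k ∈ Icc 1 n, p k := by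
            rw [key_sum]; apply Finset.sum_congr rfl; intro i _; rw [Nat.add_comm]
          rw [he]
          calc ∑ k ∈ Icc 1 n, p k ≤ ∑ k ∈ Icc 1 (max n (α/2)), p k := by
                apply Finset.sum_le_sum_of_subset_of_nonneg
                · intro k hk; simp only [Finset.mem_Icc] at hk ⊢; omega
                · intro k _ _; exact hpnn k
            _ = ∑ k ∈ Icc 1 (α/2), p k := hpad _ (by omega)
            _ ≤ _ := hpsum
        have hfc : (0:ℝ) ≤ ((α - 2 : ℕ):ℝ) := by positivity
        nlinarith
      have hfin : (α.factorial:ℝ) + (((α - 2 : ℕ):ℝ) * (α.factorial:ℝ) + α)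
          ≤ ((α+1).factorial : ℝ) := by
        rw [Nat.factorial_succ]
        push_cast
        rcases le_or_gt 2 α with h|h
        · rw [Nat.cast_sub h]
          have h1 : (α:ℝ) ≤ (α.factorial:ℝ) := by exact_mod_cast Nat.self_le_factorial α
          have h2 : (2:ℝ) ≤ (α:ℝ) := by exact_mod_cast h
          push_cast
          nlinarith
        · have hα1 : α = 1 := by omega
          subst hα1
          norm_num [Nat.factorial]
      linarith
    refine ⟨q, hq0, hqnn, hqz, hq1, hqsum, ?_⟩
    intro x
    rw [iteratedDeriv_succ]
    have hfn : iteratedDeriv α (fun y : ℝ => Complex.exp (I * (G:ℂ) * (y:ℂ)^2))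
        = fun y : ℝ => Complex.exp (I * (G:ℂ) * (y:ℂ)^2) *
            ∑ k ∈ range (α/2+1), ((p k:ℂ) * (2*I*(G:ℂ))^(α-k)) * (y:ℂ)^(α-2*k) := by
      funext y
      rw [hpd y]
    rw [hfn]
    have hd : deriv (fun y : ℝ => Complex.exp (I * (G:ℂ) * (y:ℂ)^2) *
        ∑ k ∈ range (α/2+1), ((p k:ℂ) * (2*I*(G:ℂ))^(α-k)) * (y:ℂ)^(α-2*k)) x
        = Complex.exp (I * (G:ℂ) * (x:ℂ)^2) *
          ((2*I*(G:ℂ)*(x:ℂ)) *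
            (∑ k ∈ range (α/2+1), ((p k:ℂ) * (2*I*(G:ℂ))^(α-k)) * (x:ℂ)^(α-2*k))
            + ∑ k ∈ range (α/2+1),
                ((p k:ℂ) * (2*I*(G:ℂ))^(α-k)) * ((α-2*k : ℕ):ℂ) * (x:ℂ)^(α-2*k-1)) :=
      (hasDerivAt_key G (α/2+1) (fun k => (p k:ℂ) * (2*I*(G:ℂ))^(α-k))
        (fun k => α - 2*k) x).deriv
    rw [hd]
    congr 1
    exact sum_identity (2*I*(G:ℂ)) (x:ℂ) α p q hp0 hq0 hpz hqz hqk

/-- For every positive integer `α` and real `G`, the `α`-th derivative of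
`x ↦ exp(i G x²)` equals `exp(i G x²) · ∑_{k=0}^{⌊α/2⌋} p_{α,k} (2iG)^{α−k} x^{α−2k}`
for nonnegative real coefficients with `p_{α,0} = 1`, `p_{α,k} ≥ 1` for `k ≥ 1`, and
`∑_{k=1}^{⌊α/2⌋} p_{α,k} ≤ α!`. -/
theorem deriv_exp_quadratic (α : ℕ) (hα : 1 ≤ α) (G : ℝ) :
    ∃ p : ℕ → ℝ,
      p 0 = 1 ∧
      (∀ k, 0 ≤ p k) ∧
      (∀ k, 1 ≤ k → k ≤ α / 2 → 1 ≤ p k) ∧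
      (∑ k ∈ Finset.Icc 1 (α / 2), p k) ≤ (α.factorial : ℝ) ∧
      ∀ x : ℝ,
        iteratedDeriv α (fun y : ℝ => Complex.exp (Complex.I * (G : ℂ) * (y : ℂ) ^ 2)) x =
          Complex.exp (Complex.I * (G : ℂ) * (x : ℂ) ^ 2) *
            ∑ k ∈ Finset.range (α / 2 + 1),
              (p k : ℂ) * (2 * Complex.I * (G : ℂ)) ^ (α - k) * (x : ℂ) ^ (α - 2 * k) := by
  obtain ⟨p, hp0, hpnn, _, hp1, hpsum, hpd⟩ := aux_main G α hα
  exact ⟨p, hp0, hpnn, hp1, hpsum, hpd⟩
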